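/- Let n ≥ 2 be an integer and let A be a subset of Z_n \ {0} with |A| = k. Then there exists a subset B of A with |B| ≥ ⌊(k+1)/2⌋ such that the elements of B can be ordered so that all partial sums of the ordering are pairwise distinct in Z_n. -/

import Mathlib

/-- The partial sums of the ordering `l` are pairwise distinct. -/
def distinctPartialSums {n : ℕ} (l : List (ZMod n)) : Prop :=
  ∀ i j : ℕ, i < j → j < l.length → (l.take (i + 1)).sum ≠ (l.take (j + 1)).sum

/-- Every `k`-subset `A` of `ZMod n \ {0}` has a subset `B` with
`|B| ≥ ⌊(k+1)/2⌋` that can be ordered so that all partial sums are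
pairwise distinct. -/
theorem exists_large_orderable_subset
    (n : ℕ) (hn : 2 ≤ n) (A : Finset (ZMod n)) (h0 : (0 : ZMod n) ∉ A)
    (k : ℕ) (hcard : A.card = k) :
    ∃ B ⊆ A, (k + 1) / 2 ≤ B.card ∧
      ∃ l : List (ZMod n), l.Nodup ∧ l.toFinset = B ∧ distinctPartialSums l := by
  have key : ∀ m : ℕ, m ≤ (k + 1) / 2 → ∃ l : List (ZMod n), l.Nodup ∧ l.length = m ∧
      l.toFinset ⊆ A ∧ distinctPartialSums l := by
    intro m
    induction m with
    | zero =>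
      intro _
      exact ⟨[], List.nodup_nil, rfl, by simp, fun i j hij hj => by simp at hj⟩
    | succ r ih =>
      intro hm
      obtain ⟨l, hnd, hlen, hsub, hdps⟩ := ih (Nat.le_of_succ_le hm)
      have hk : 2 * r < k := by omega
      set F : Finset (ZMod n) :=
        (Finset.range r).image (fun i => (l.take (i + 1)).sum - l.sum) with hF
      have hFcard : F.card ≤ r :=
        le_trans Finset.card_image_le (by simp)
      have hlcard : l.toFinset.card = r := by
        rw [List.toFinset_card_of_nodup hnd, hlen]
      have hA : r < (A \ l.toFinset).card := by
        have := Finset.card_sdiff_of_subset hsub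
        omega
      have hne : ((A \ l.toFinset) \ F).Nonempty := by
        rw [← Finset.card_pos]
        have := Finset.le_card_sdiff F (A \ l.toFinset)
        omega
      obtain ⟨b, hb⟩ := hne
      rw [Finset.mem_sdiff, Finset.mem_sdiff] at hb
      obtain ⟨⟨hbA, hbl⟩, hbF⟩ := hb
      refine ⟨l ++ [b], ?_, by simp [hlen], ?_, ?_⟩
      · simp only [List.nodup_append, List.nodup_cons, List.nodup_nil]
        refine ⟨hnd, by simp, by simp only [List.mem_toFinset] at hbl; simp; intro a ha hab; exact hbl (hab ▸ ha)⟩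
      · intro x hx
        simp only [List.toFinset_append, Finset.mem_union, List.toFinset_cons,
          List.toFinset_nil, Finset.mem_insert, Finset.mem_singleton] at hx
        rcases hx with h | h
        · exact hsub h
        · have hx2 : x = b := by simpa using h
          exact hx2 ▸ hbA
      · intro i j hij hj
        simp only [List.length_append, List.length_singleton, hlen] at hj
        have htake : ∀ i : ℕ, i < r → ((l ++ [b]).take (i + 1)).sum = (l.take (i + 1)).sum := by
          intro i hi
          rw [List.take_append_of_le_length (by omega)]
        rcases Nat.lt_or_ge j r with hjm | hjm
        · rw [htake i (lt_trans hij hjm), htake j hjm]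
          exact hdps i j hij (hlen ▸ hjm)
        · have hjeq : j = r := by omega
          have hir : i < r := by omega
          rw [hjeq, htake i hir]
          have hfull : ((l ++ [b]).take (r + 1)) = l ++ [b] := by
            apply List.take_of_length_le
            simp [hlen]
          rw [hfull, List.sum_append, List.sum_singleton]
          intro heq
          apply hbF
          rw [hF]
          simp only [Finset.mem_image, Finset.mem_range]
          exact ⟨i, hir, by rw [heq]; ring⟩
  obtain ⟨l, hnd, hlen, hsub, hdps⟩ := key ((k + 1) / 2) le_rfl
  refine ⟨l.toFinset, hsub, ?_, l, hnd, rfl, hdps⟩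
  rw [List.toFinset_card_of_nodup hnd, hlen]
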